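/- arXiv:1804.08432 — 2 statements merged into one kernel-verified Lean document; each statement's English description precedes it below -/
import Mathlib

section
/- Let λ > 0, T > 0 and let τ₁, …, τₙ be i.i.d. real random variables with exponential density ρ_λ(x) = λ e^{−λx} on (0,∞), and set Sₙ = τ₁ + ⋯ + τₙ. Then E[ 1_{Sₙ < T} · ∏_{j=1}^{n} 1/ρ_λ(τⱼ)² ] ≤ e^{λT} Tⁿ / (λⁿ n!). -/
set_option maxHeartbeats 1000000

open MeasureTheory

/-- The measure on `ℝ` with exponential density `ρ_λ(x) = λ e^{-λ x}` on `(0, ∞)`. -/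
noncomputable def expMeasure' (l : ℝ) : Measure ℝ :=
  volume.withDensity fun x => ENNReal.ofReal (if 0 < x then l * Real.exp (-l * x) else 0)

noncomputable def expBound (l : ℝ) (n : ℕ) (T : ℝ) : ENNReal :=
  if 0 < T then ENNReal.ofReal (Real.exp (l * T) * T ^ n / (l ^ n * (n.factorial : ℝ))) else 0

instance (l : ℝ) : SigmaFinite (expMeasure' l) := by
  unfold expMeasure'
  infer_instance

lemma expKey (l : ℝ) (hl : 0 < l) : ∀ (n : ℕ) (T : ℝ),
    ∫⁻ τ : Fin n → ℝ,
      ENNReal.ofReal (if (∑ j, τ j) < T then ∏ j, ((l * Real.exp (-l * τ j)) ^ 2)⁻¹ else 0)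
      ∂(Measure.pi fun _ => expMeasure' l) ≤ expBound l n T := by
  intro n
  induction n with
  | zero =>
    intro T
    simp only [Finset.univ_eq_empty, Finset.sum_empty, Finset.prod_empty]
    rw [lintegral_const]
    rw [Measure.pi_univ]
    simp only [Finset.univ_eq_empty, Finset.prod_empty, mul_one]
    unfold expBound
    split_ifs with h
    · simp only [pow_zero, one_mul, mul_one, Nat.factorial_zero, Nat.cast_one, div_one]
      exact ENNReal.ofReal_le_ofReal (Real.one_le_exp (by positivity))
    · simp
  | succ n IH =>
    intro T
    have hexp_meas : Measurable fun t : ℝ => ((l * Real.exp (-l * t)) ^ 2)⁻¹ := by fun_prop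
    have hbound_meas : Measurable (expBound l n) := by
      unfold expBound
      exact Measurable.ite (measurableSet_lt measurable_const measurable_id)
        (by fun_prop) measurable_const
    set F : ℝ × (Fin n → ℝ) → ENNReal := fun p =>
      ENNReal.ofReal (if p.1 + ∑ j, p.2 j < T then
        ((l * Real.exp (-l * p.1)) ^ 2)⁻¹ * ∏ j, ((l * Real.exp (-l * p.2 j)) ^ 2)⁻¹ else 0)
      with hF
    have hFmeas : Measurable F := by
      apply Measurable.ennreal_ofReal
      apply Measurable.ite
      · apply measurableSet_lt _ measurable_const
        exact (measurable_fst.add (by fun_prop))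
      · fun_prop
      · exact measurable_const
    have hmp := measurePreserving_piFinSuccAbove (fun _ : Fin (n+1) => expMeasure' l) 0
    have hmain : (∫⁻ τ : Fin (n+1) → ℝ,
        ENNReal.ofReal (if (∑ j, τ j) < T then ∏ j, ((l * Real.exp (-l * τ j)) ^ 2)⁻¹ else 0)
        ∂(Measure.pi fun _ => expMeasure' l))
        ≤ ∫⁻ t : ℝ, ENNReal.ofReal (if 0 < t then l * Real.exp (-l * t) else 0) *
            (ENNReal.ofReal (((l * Real.exp (-l * t)) ^ 2)⁻¹) * expBound l n (T - t)) := by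
      have step1 : (∫⁻ τ : Fin (n+1) → ℝ,
          ENNReal.ofReal (if (∑ j, τ j) < T then ∏ j, ((l * Real.exp (-l * τ j)) ^ 2)⁻¹ else 0)
          ∂(Measure.pi fun _ => expMeasure' l))
          = ∫⁻ p, F p ∂((expMeasure' l).prod (Measure.pi fun _ : Fin n => expMeasure' l)) := by
        rw [← hmp.lintegral_comp hFmeas]
        refine lintegral_congr fun τ => ?_
        simp only [hF, MeasurableEquiv.piFinSuccAbove_apply, Fin.insertNthEquiv,
          Fin.sum_univ_succ, Fin.prod_univ_succ, Fin.succAbove_zero, Equiv.coe_fn_symm_mk,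
          Fin.removeNth]
        rfl
      rw [step1, lintegral_prod _ hFmeas.aemeasurable]
      have step2 : ∀ t : ℝ, (∫⁻ τ : Fin n → ℝ, F (t, τ) ∂(Measure.pi fun _ => expMeasure' l))
          ≤ ENNReal.ofReal (((l * Real.exp (-l * t)) ^ 2)⁻¹) * expBound l n (T - t) := by
        intro t
        have heq : ∀ τ : Fin n → ℝ, F (t, τ)
            = ENNReal.ofReal (((l * Real.exp (-l * t)) ^ 2)⁻¹) *
              ENNReal.ofReal (if (∑ j, τ j) < T - t then
                ∏ j, ((l * Real.exp (-l * τ j)) ^ 2)⁻¹ else 0) := by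
          intro τ
          simp only [hF]
          rw [if_congr (show (t + ∑ j, τ j < T) ↔ ((∑ j, τ j) < T - t) from
            lt_sub_iff_add_lt'.symm) rfl rfl]
          split_ifs with h
          · rw [ENNReal.ofReal_mul (by positivity)]
          · simp
        rw [lintegral_congr heq, lintegral_const_mul _ (by
          apply Measurable.ennreal_ofReal
          apply Measurable.ite
          · exact measurableSet_lt (by fun_prop) measurable_const
          · fun_prop
          · exact measurable_const)]
        exact mul_le_mul_of_nonneg_left (IH (T - t)) zero_le
      calc ∫⁻ t, (∫⁻ τ : Fin n → ℝ, F (t, τ) ∂(Measure.pi fun _ => expMeasure' l))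
              ∂(expMeasure' l)
          ≤ ∫⁻ t, ENNReal.ofReal (((l * Real.exp (-l * t)) ^ 2)⁻¹) * expBound l n (T - t)
              ∂(expMeasure' l) := lintegral_mono step2
        _ = _ := by
            unfold expMeasure'
            have hg : Measurable fun t : ℝ =>
                ENNReal.ofReal (((l * Real.exp (-l * t)) ^ 2)⁻¹) * expBound l n (T - t) :=
              hexp_meas.ennreal_ofReal.mul
                (hbound_meas.comp (measurable_const.sub measurable_id))
            have hd : Measurable fun x : ℝ =>
                ENNReal.ofReal (if 0 < x then l * Real.exp (-l * x) else 0) :=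
              Measurable.ennreal_ofReal (Measurable.ite
                (measurableSet_lt measurable_const measurable_id) (by fun_prop)
                measurable_const)
            rw [lintegral_withDensity_eq_lintegral_mul _ hd hg]
            rfl
    by_cases hT : 0 < T
    · refine le_trans hmain ?_
      set C : ℝ := Real.exp (l * T) / (l ^ (n+1) * (n.factorial : ℝ)) with hC
      have hC0 : (0:ℝ) ≤ C := by positivity
      have hpt : ∀ t : ℝ, ENNReal.ofReal (if 0 < t then l * Real.exp (-l * t) else 0) *
          (ENNReal.ofReal (((l * Real.exp (-l * t)) ^ 2)⁻¹) * expBound l n (T - t))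
          ≤ Set.indicator (Set.Ioo 0 T) (fun t => ENNReal.ofReal (C * (T - t) ^ n)) t := by
        intro t
        by_cases ht : 0 < t
        · by_cases htT : t < T
          · have hTt : (0:ℝ) < T - t := by linarith
            rw [if_pos ht, Set.indicator_of_mem (Set.mem_Ioo.2 ⟨ht, htT⟩)]
            unfold expBound
            rw [if_pos hTt]
            rw [← ENNReal.ofReal_mul (show (0:ℝ) ≤ ((l * Real.exp (-l * t)) ^ 2)⁻¹ by
              positivity)]
            rw [← ENNReal.ofReal_mul (show (0:ℝ) ≤ l * Real.exp (-l * t) by positivity)]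
            apply ENNReal.ofReal_le_ofReal
            apply le_of_eq
            have h2 : Real.exp (l * t) * Real.exp (l * (T - t)) = Real.exp (l * T) := by
              rw [← Real.exp_add]; ring_nf
            have h3 : Real.exp (-l * t) = (Real.exp (l * t))⁻¹ := by
              rw [← Real.exp_neg]; ring_nf
            rw [h3, hC, ← h2]
            have he1 := (Real.exp_pos (l * t)).ne'
            have he2 := (Real.exp_pos (l * (T - t))).ne'
            have hn : (0:ℝ) < (n.factorial : ℝ) := by positivity
            field_simp
            ring
          · have : expBound l n (T - t) = 0 := by
              unfold expBound; rw [if_neg (by push_neg at htT ⊢; linarith)]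
            rw [this, mul_zero, mul_zero]
            exact zero_le
        · rw [if_neg ht, ENNReal.ofReal_zero, zero_mul]
          exact zero_le
      have hint : IntegrableOn (fun t : ℝ => C * (T - t) ^ n) (Set.Ioo 0 T) := by
        have h1 : IntegrableOn (fun t : ℝ => C * (T - t) ^ n) (Set.Icc 0 T) volume :=
          (continuous_const.mul ((continuous_const.sub continuous_id).pow n)).integrableOn_Icc
        exact h1.mono_set Set.Ioo_subset_Icc_self
      calc ∫⁻ t : ℝ, ENNReal.ofReal (if 0 < t then l * Real.exp (-l * t) else 0) *
              (ENNReal.ofReal (((l * Real.exp (-l * t)) ^ 2)⁻¹) * expBound l n (T - t))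
          ≤ ∫⁻ t, Set.indicator (Set.Ioo 0 T) (fun t => ENNReal.ofReal (C * (T - t) ^ n)) t :=
            lintegral_mono hpt
        _ = ∫⁻ t in Set.Ioo 0 T, ENNReal.ofReal (C * (T - t) ^ n) :=
            lintegral_indicator measurableSet_Ioo _
        _ = ENNReal.ofReal (∫ t in Set.Ioo 0 T, C * (T - t) ^ n) := by
            rw [← ofReal_integral_eq_lintegral_ofReal hint]
            filter_upwards [ae_restrict_mem measurableSet_Ioo] with t ht
            exact mul_nonneg hC0 (pow_nonneg (by linarith [ht.2]) n)
        _ ≤ expBound l (n+1) T := by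
            have hval : (∫ t in Set.Ioo 0 T, C * (T - t) ^ n) = C * (T ^ (n+1) / (n+1)) := by
              rw [← MeasureTheory.integral_Ioc_eq_integral_Ioo,
                ← intervalIntegral.integral_of_le hT.le,
                intervalIntegral.integral_const_mul,
                intervalIntegral.integral_comp_sub_left (fun s => s ^ n) T]
              simp [integral_pow]
            rw [hval]
            unfold expBound
            rw [if_pos hT]
            apply ENNReal.ofReal_le_ofReal
            apply le_of_eq
            rw [hC, Nat.factorial_succ]
            have hn : (0:ℝ) < (n.factorial : ℝ) := by positivity
            push_cast
            field_simp
    · -- T ≤ 0 : everything vanishes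
      have hz : ∀ t : ℝ, ENNReal.ofReal (if 0 < t then l * Real.exp (-l * t) else 0) *
          (ENNReal.ofReal (((l * Real.exp (-l * t)) ^ 2)⁻¹) * expBound l n (T - t)) = 0 := by
        intro t
        by_cases ht : 0 < t
        · have : expBound l n (T - t) = 0 := by
            unfold expBound
            rw [if_neg (by push_neg at hT ⊢; linarith)]
          rw [this, mul_zero, mul_zero]
        · rw [if_neg ht, ENNReal.ofReal_zero, zero_mul]
      refine le_trans hmain ?_
      rw [lintegral_congr hz, lintegral_zero]
      exact zero_le

/-- For i.i.d. exponential(λ) random variables `τ₁, …, τₙ` with sum `Sₙ`,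
`E[1_{Sₙ < T} ∏ⱼ 1/ρ_λ(τⱼ)²] ≤ e^{λT} Tⁿ / (λⁿ n!)`. -/
theorem stmt_1 (n : ℕ) (l T : ℝ) (hl : 0 < l) (hT : 0 < T) :
    ∫ τ : Fin n → ℝ,
      (if (∑ j, τ j) < T then ∏ j, ((l * Real.exp (-l * τ j)) ^ 2)⁻¹ else 0)
      ∂(Measure.pi fun _ => expMeasure' l)
    ≤ Real.exp (l * T) * T ^ n / (l ^ n * (n.factorial : ℝ)) := by
  have hf_nonneg : ∀ τ : Fin n → ℝ,
      0 ≤ (if (∑ j, τ j) < T then ∏ j, ((l * Real.exp (-l * τ j)) ^ 2)⁻¹ else 0) := by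
    intro τ
    split_ifs
    · exact Finset.prod_nonneg fun j _ => by positivity
    · exact le_refl 0
  have hmeas : Measurable fun τ : Fin n → ℝ =>
      (if (∑ j, τ j) < T then ∏ j, ((l * Real.exp (-l * τ j)) ^ 2)⁻¹ else 0) := by
    apply Measurable.ite
    · exact measurableSet_lt (Finset.univ.measurable_sum fun j _ => measurable_pi_apply j)
        measurable_const
    · fun_prop
    · exact measurable_const
  rw [integral_eq_lintegral_of_nonneg_ae (Filter.Eventually.of_forall hf_nonneg)
    hmeas.aestronglyMeasurable]
  have h := expKey l hl n T
  rw [expBound, if_pos hT] at h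
  calc _ ≤ (ENNReal.ofReal (Real.exp (l * T) * T ^ n / (l ^ n * (n.factorial : ℝ)))).toReal :=
        ENNReal.toReal_mono ENNReal.ofReal_ne_top h
    _ = _ := ENNReal.toReal_ofReal (by positivity)
end

section
/- Let λ > 0, T > 0 and 0 < u < 1, and let τ₁, …, τ_p be i.i.d. real random variables on (0,∞) with Gamma density ρ(x) = λᵘ x^{u−1} e^{−λx} / Γ(u), and set S_p = τ₁ + ⋯ + τ_p. Then E[ 1_{S_p < T} · (1/ρ(τ₁)²) · ∏_{j=2}^{p} 1/(ρ(τⱼ)² τⱼ) ] ≤ (Γ(u)/λᵘ)ᵖ e^{λT} · T^{(1−u)p+1} / ( (2−u)(1−u)^{p−1} ). -/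
open MeasureTheory
open scoped NNReal ENNReal

/-- The Gamma density with shape `u` and rate `λ`: `ρ(x) = λᵘ x^{u-1} e^{-λx} / Γ(u)` on
`(0, ∞)`. -/
noncomputable def gammaPdf (l u x : ℝ) : ℝ :=
  if 0 < x then l ^ u * x ^ (u - 1) * Real.exp (-l * x) / Real.Gamma u else 0

/-- The measure on `ℝ` with Gamma(u, λ) density. -/
noncomputable def gammaMeasure' (l u : ℝ) : Measure ℝ :=
  volume.withDensity fun x => ENNReal.ofReal (gammaPdf l u x)

lemma gammaPdf_nonneg (l u x : ℝ) (hl : 0 < l) (hu : 0 < u) : 0 ≤ gammaPdf l u x := by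
  unfold gammaPdf
  split
  · have := Real.Gamma_pos_of_pos hu
    positivity
  · exact le_refl 0

lemma measurable_gammaPdf (l u : ℝ) : Measurable (gammaPdf l u) := by
  unfold gammaPdf
  exact Measurable.ite (measurableSet_lt measurable_const measurable_id) (by fun_prop) measurable_const

lemma gammaPdf_pos (l u x : ℝ) (hl : 0 < l) (hu : 0 < u) (hx : 0 < x) : 0 < gammaPdf l u x := by
  rw [gammaPdf, if_pos hx]
  have := Real.Gamma_pos_of_pos hu
  positivity

lemma inv_gammaPdf (l u x : ℝ) (hl : 0 < l) (hu : 0 < u) (hx : 0 < x) :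
    (gammaPdf l u x)⁻¹ = Real.Gamma u / l ^ u * x ^ (1 - u) * Real.exp (l * x) := by
  have hΓ := Real.Gamma_pos_of_pos hu
  have hlu : (0:ℝ) < l ^ u := Real.rpow_pos_of_pos hl u
  have hxp : (0:ℝ) < x ^ (u - 1) := Real.rpow_pos_of_pos hx _
  apply inv_eq_of_mul_eq_one_right
  rw [gammaPdf, if_pos hx]
  have h1 : x ^ (u - 1) * x ^ (1 - u) = 1 := by
    rw [← Real.rpow_add hx]; norm_num
  have h2 : Real.exp (-l * x) * Real.exp (l * x) = 1 := by
    rw [← Real.exp_add]; norm_num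
  field_simp
  calc x ^ (u - 1) * Real.exp (-(l * x)) * x ^ (1 - u) * Real.exp (l * x)
      = (x ^ (u - 1) * x ^ (1 - u)) * (Real.exp (-(l * x)) * Real.exp (l * x)) := by ring
    _ = 1 := by
        rw [h1, show Real.exp (-(l * x)) * Real.exp (l * x) = 1 from by rw [← Real.exp_add]; norm_num]; ring

lemma gamma_smul_eq_indicator (l u T a : ℝ) (hl : 0 < l) (hu0 : 0 < u) :
    (fun x => (gammaPdf l u x).toNNReal •
        (if 0 < x ∧ x < T then Real.Gamma u / l ^ u * x ^ a * (gammaPdf l u x)⁻¹ else 0))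
      = (Set.Ioo 0 T).indicator (fun x => Real.Gamma u / l ^ u * x ^ a) := by
  funext x
  by_cases hx : 0 < x ∧ x < T
  · rw [if_pos hx, Set.indicator_of_mem (Set.mem_Ioo.2 hx)]
    have hρ : 0 < gammaPdf l u x := gammaPdf_pos l u x hl hu0 hx.1
    rw [NNReal.smul_def, Real.coe_toNNReal _ hρ.le]
    rw [smul_eq_mul, mul_comm]
    exact inv_mul_cancel_right₀ hρ.ne' _
  · rw [if_neg hx, Set.indicator_of_notMem (by simpa [Set.mem_Ioo] using hx), smul_zero]

lemma gamma_aux_integrable (l u T a : ℝ) (hl : 0 < l) (hu0 : 0 < u) (hT : 0 < T) (ha : -1 < a) :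
    Integrable (fun x => if 0 < x ∧ x < T then Real.Gamma u / l ^ u * x ^ a * (gammaPdf l u x)⁻¹ else 0)
      (gammaMeasure' l u) := by
  have hd : Measurable fun x => (gammaPdf l u x).toNNReal := (measurable_gammaPdf l u).real_toNNReal
  have hγ : gammaMeasure' l u
      = volume.withDensity fun x => (((gammaPdf l u x).toNNReal : ℝ≥0) : ℝ≥0∞) := rfl
  rw [hγ, integrable_withDensity_iff_integrable_smul hd]
  rw [gamma_smul_eq_indicator l u T a hl hu0]
  rw [integrable_indicator_iff measurableSet_Ioo]
  exact ((intervalIntegral.integrableOn_Ioo_rpow_iff hT).2 ha).const_mul _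

lemma gamma_aux_integral (l u T a : ℝ) (hl : 0 < l) (hu0 : 0 < u) (hT : 0 < T) (ha : -1 < a) :
    ∫ x, (if 0 < x ∧ x < T then Real.Gamma u / l ^ u * x ^ a * (gammaPdf l u x)⁻¹ else 0)
        ∂(gammaMeasure' l u)
      = Real.Gamma u / l ^ u * (T ^ (a + 1) / (a + 1)) := by
  have hd : Measurable fun x => (gammaPdf l u x).toNNReal := (measurable_gammaPdf l u).real_toNNReal
  have hγ : gammaMeasure' l u
      = volume.withDensity fun x => (((gammaPdf l u x).toNNReal : ℝ≥0) : ℝ≥0∞) := rfl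
  rw [hγ, integral_withDensity_eq_integral_smul hd]
  rw [show (fun x => (gammaPdf l u x).toNNReal •
        (if 0 < x ∧ x < T then Real.Gamma u / l ^ u * x ^ a * (gammaPdf l u x)⁻¹ else 0))
      = (Set.Ioo 0 T).indicator (fun x => Real.Gamma u / l ^ u * x ^ a)
    from gamma_smul_eq_indicator l u T a hl hu0]
  rw [integral_indicator measurableSet_Ioo, ← integral_Ioc_eq_integral_Ioo,
    ← intervalIntegral.integral_of_le hT.le, intervalIntegral.integral_const_mul,
    integral_rpow (Or.inl ha), Real.zero_rpow (by linarith), sub_zero]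

lemma pi_integrable_prod {p : ℕ} (γ : Measure ℝ) [SigmaFinite γ] {f : Fin p → ℝ → ℝ}
    (hf : ∀ i, Integrable (f i) γ) :
    Integrable (fun x : Fin p → ℝ => ∏ i, f i (x i)) (Measure.pi fun _ => γ) := by
  letI : MeasureSpace ℝ := ⟨γ⟩
  exact Integrable.fintype_prod hf

lemma pi_integral_prod {p : ℕ} (γ : Measure ℝ) [SigmaFinite γ] (f : Fin p → ℝ → ℝ) :
    ∫ x : Fin p → ℝ, ∏ i, f i (x i) ∂(Measure.pi fun _ => γ) = ∏ i, ∫ x, f i x ∂γ := by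
  letI : MeasureSpace ℝ := ⟨γ⟩
  exact integral_fintype_prod_eq_prod f


/-- For i.i.d. Gamma(u, λ) random variables `τ₁, …, τ_p` (with `0 < u < 1`) and `S_p` their sum,
`E[1_{S_p < T} · ρ(τ₁)⁻² · ∏_{j=2}^p (ρ(τⱼ)² τⱼ)⁻¹]
  ≤ (Γ(u)/λᵘ)ᵖ e^{λT} T^{(1-u)p+1} / ((2-u)(1-u)^{p-1})`. -/
theorem stmt_5 (p : ℕ) (hp : 1 ≤ p) (l u T : ℝ) (hl : 0 < l) (hu0 : 0 < u) (hu1 : u < 1)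
    (hT : 0 < T) :
    ∫ τ : Fin p → ℝ,
      (if (∑ j, τ j) < T then
        ((gammaPdf l u (τ ⟨0, hp⟩)) ^ 2)⁻¹ *
          ∏ j ∈ Finset.univ.erase (⟨0, hp⟩ : Fin p), ((gammaPdf l u (τ j)) ^ 2 * τ j)⁻¹
       else 0)
      ∂(Measure.pi fun _ => gammaMeasure' l u)
    ≤ (Real.Gamma u / l ^ u) ^ p * Real.exp (l * T) * T ^ ((1 - u) * (p : ℝ) + 1)
        / ((2 - u) * (1 - u) ^ (p - 1)) := by
  have hΓ := Real.Gamma_pos_of_pos hu0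
  have hlu : (0:ℝ) < l ^ u := Real.rpow_pos_of_pos hl u
  have hCpos : (0:ℝ) < Real.Gamma u / l ^ u := div_pos hΓ hlu
  set C : ℝ := Real.Gamma u / l ^ u with hC
  set i0 : Fin p := ⟨0, hp⟩ with hi0def
  haveI : SigmaFinite (gammaMeasure' l u) := by unfold gammaMeasure'; infer_instance
  set ee : Fin p → ℝ := fun j => if j = i0 then 1 - u else -u with heedef
  set h : Fin p → ℝ → ℝ :=
    fun j x => if 0 < x ∧ x < T then C * x ^ ee j * (gammaPdf l u x)⁻¹ else 0 with hhdef
  have heval : ∀ j x, h j x = if 0 < x ∧ x < T then C * x ^ ee j * (gammaPdf l u x)⁻¹ else 0 :=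
    fun j x => rfl
  have hee : ∀ j, -1 < ee j := by
    intro j
    rw [heedef]
    dsimp only
    split <;> linarith
  have hhnn : ∀ j x, 0 ≤ h j x := by
    intro j x
    rw [heval]
    split
    · next hx =>
      have h1 : 0 ≤ (gammaPdf l u x)⁻¹ := inv_nonneg.2 (gammaPdf_nonneg l u x hl hu0)
      have h2 : (0:ℝ) ≤ x ^ ee j := Real.rpow_nonneg hx.1.le _
      positivity
    · exact le_refl 0
  have hintg : ∀ j, Integrable (h j) (gammaMeasure' l u) := by
    intro j
    exact gamma_aux_integrable l u T (ee j) hl hu0 hT (hee j)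
  have hint : ∀ j, ∫ x, h j x ∂(gammaMeasure' l u) = C * (T ^ (ee j + 1) / (ee j + 1)) := by
    intro j
    exact gamma_aux_integral l u T (ee j) hl hu0 hT (hee j)
  -- key pointwise identities
  have key1 : ∀ x : ℝ, 0 < x → x < T →
      ((gammaPdf l u x) ^ 2)⁻¹ = Real.exp (l * x) * h i0 x := by
    intro x hx hxT
    rw [heval, if_pos ⟨hx, hxT⟩, heedef]
    dsimp only
    rw [if_pos rfl, sq, mul_inv]
    nth_rewrite 1 [inv_gammaPdf l u x hl hu0 hx]
    ring
  have key2 : ∀ (j : Fin p), j ≠ i0 → ∀ x : ℝ, 0 < x → x < T →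
      ((gammaPdf l u x) ^ 2 * x)⁻¹ = Real.exp (l * x) * h j x := by
    intro j hj x hx hxT
    rw [heval, if_pos ⟨hx, hxT⟩, heedef]
    dsimp only
    rw [if_neg hj, mul_inv, sq, mul_inv]
    nth_rewrite 1 [inv_gammaPdf l u x hl hu0 hx]
    have hxx : x ^ (1 - u) * x⁻¹ = x ^ (-u) := by
      rw [← Real.rpow_neg_one x, ← Real.rpow_add hx]
      congr 1
      ring
    rw [← hxx]
    ring
  -- pointwise bound
  have hbound : ∀ τ : Fin p → ℝ,
      (if (∑ j, τ j) < T then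
        ((gammaPdf l u (τ i0)) ^ 2)⁻¹ *
          ∏ j ∈ Finset.univ.erase i0, ((gammaPdf l u (τ j)) ^ 2 * τ j)⁻¹
       else 0)
        ≤ Real.exp (l * T) * ∏ j, h j (τ j) := by
    intro τ
    have hpr : 0 ≤ ∏ j, h j (τ j) := Finset.prod_nonneg fun j _ => hhnn j (τ j)
    have hR : 0 ≤ Real.exp (l * T) * ∏ j, h j (τ j) :=
      mul_nonneg (Real.exp_nonneg _) hpr
    split
    case isFalse => exact hR
    case isTrue hs =>
      by_cases hall : ∀ j, 0 < τ j
      · have hlt : ∀ j, τ j < T := fun j =>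
          lt_of_le_of_lt
            (Finset.single_le_sum (f := τ) (fun i _ => (hall i).le) (Finset.mem_univ j)) hs
        have heq : ((gammaPdf l u (τ i0)) ^ 2)⁻¹ *
              ∏ j ∈ Finset.univ.erase i0, ((gammaPdf l u (τ j)) ^ 2 * τ j)⁻¹
            = Real.exp (l * ∑ j, τ j) * ∏ j, h j (τ j) := by
          calc ((gammaPdf l u (τ i0)) ^ 2)⁻¹ *
                ∏ j ∈ Finset.univ.erase i0, ((gammaPdf l u (τ j)) ^ 2 * τ j)⁻¹
              = (Real.exp (l * τ i0) * h i0 (τ i0)) *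
                ∏ j ∈ Finset.univ.erase i0, (Real.exp (l * τ j) * h j (τ j)) := by
                rw [key1 (τ i0) (hall i0) (hlt i0)]
                congr 1
                exact Finset.prod_congr rfl fun j hj =>
                  key2 j (Finset.ne_of_mem_erase hj) (τ j) (hall j) (hlt j)
            _ = ∏ j, (Real.exp (l * τ j) * h j (τ j)) :=
                Finset.mul_prod_erase Finset.univ
                  (fun j => Real.exp (l * τ j) * h j (τ j)) (Finset.mem_univ i0)
            _ = (∏ j, Real.exp (l * τ j)) * ∏ j, h j (τ j) := Finset.prod_mul_distrib
            _ = Real.exp (l * ∑ j, τ j) * ∏ j, h j (τ j) := by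
                rw [← Real.exp_sum, ← Finset.mul_sum]
        rw [heq]
        exact mul_le_mul_of_nonneg_right
          (Real.exp_le_exp.2 (mul_le_mul_of_nonneg_left hs.le hl.le)) hpr
      · push_neg at hall
        obtain ⟨j, hj⟩ := hall
        have hρ : gammaPdf l u (τ j) = 0 := by rw [gammaPdf, if_neg (not_lt.2 hj)]
        by_cases hji : j = i0
        · subst hji
          rw [hρ]
          simpa using hR
        · rw [Finset.prod_eq_zero (Finset.mem_erase.2 ⟨hji, Finset.mem_univ j⟩)
            (by rw [hρ]; simp), mul_zero]
          exact hR
  have hFnn : ∀ τ : Fin p → ℝ,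
      0 ≤ (if (∑ j, τ j) < T then
        ((gammaPdf l u (τ i0)) ^ 2)⁻¹ *
          ∏ j ∈ Finset.univ.erase i0, ((gammaPdf l u (τ j)) ^ 2 * τ j)⁻¹
       else 0) := by
    intro τ
    split
    · apply mul_nonneg (inv_nonneg.2 (sq_nonneg _))
      apply Finset.prod_nonneg
      intro j _
      by_cases hxj : 0 < τ j
      · have h1 := gammaPdf_nonneg l u (τ j) hl hu0
        have := sq_nonneg (gammaPdf l u (τ j))
        positivity
      · rw [gammaPdf, if_neg hxj]
        simp
    · exact le_refl 0
  calc ∫ τ : Fin p → ℝ,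
      (if (∑ j, τ j) < T then
        ((gammaPdf l u (τ i0)) ^ 2)⁻¹ *
          ∏ j ∈ Finset.univ.erase i0, ((gammaPdf l u (τ j)) ^ 2 * τ j)⁻¹
       else 0)
      ∂(Measure.pi fun _ => gammaMeasure' l u)
      ≤ ∫ τ : Fin p → ℝ, Real.exp (l * T) * ∏ j, h j (τ j)
          ∂(Measure.pi fun _ => gammaMeasure' l u) :=
        integral_mono_of_nonneg (Filter.Eventually.of_forall hFnn)
          ((pi_integrable_prod _ hintg).const_mul _) (Filter.Eventually.of_forall hbound)
    _ = Real.exp (l * T) * ∏ j, ∫ x, h j x ∂(gammaMeasure' l u) := by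
        rw [integral_const_mul, pi_integral_prod]
    _ ≤ C ^ p * Real.exp (l * T) * T ^ ((1 - u) * (p : ℝ) + 1)
        / ((2 - u) * (1 - u) ^ (p - 1)) := by
        obtain ⟨n, rfl⟩ : ∃ n, p = n + 1 := ⟨p - 1, (Nat.succ_pred_eq_of_pos hp).symm⟩
        have hval2 : ∀ j ∈ Finset.univ.erase i0,
            (∫ x, h j x ∂(gammaMeasure' l u)) = C * (T ^ (1 - u) / (1 - u)) := by
          intro j hj
          rw [hint j]
          have he : ee j = -u := by
            rw [heedef]
            dsimp only
            rw [if_neg (Finset.ne_of_mem_erase hj)]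
          rw [he, show -u + 1 = 1 - u by ring]
        have hval1 : (∫ x, h i0 x ∂(gammaMeasure' l u)) = C * (T ^ (2 - u) / (2 - u)) := by
          rw [hint i0]
          have he : ee i0 = 1 - u := by
            rw [heedef]
            dsimp only
            rw [if_pos rfl]
          rw [he, show 1 - u + 1 = 2 - u by ring]
        have hprod : ∏ j, ∫ x, h j x ∂(gammaMeasure' l u)
            = (C * (T ^ (2 - u) / (2 - u))) * (C * (T ^ (1 - u) / (1 - u))) ^ n := by
          rw [← Finset.mul_prod_erase Finset.univ
              (fun j => ∫ x, h j x ∂(gammaMeasure' l u)) (Finset.mem_univ i0),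
            hval1, Finset.prod_congr rfl hval2, Finset.prod_const,
            Finset.card_erase_of_mem (Finset.mem_univ i0),
            Finset.card_univ, Fintype.card_fin, Nat.add_sub_cancel]
        rw [hprod]
        apply le_of_eq
        have hTpow : T ^ ((1 - u) * ((n:ℝ) + 1) + 1) = T ^ (2 - u) * (T ^ (1 - u)) ^ n := by
          rw [← Real.rpow_natCast (T ^ (1 - u)) n, ← Real.rpow_mul hT.le, ← Real.rpow_add hT]
          ring_nf
        simp only [Nat.add_sub_cancel]
        push_cast
        rw [hTpow]
        have h2u : (2:ℝ) - u ≠ 0 := by linarith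
        have h1u : (1:ℝ) - u ≠ 0 := by linarith
        field_simp
        ring_nf
        rw [mul_assoc (C * C ^ n * (T ^ (1 - u)) ^ n), ← mul_pow, inv_mul_cancel₀ h1u, one_pow, mul_one]
end
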